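/- arXiv:2205.02174 — 2 statements merged into one kernel-verified Lean document; each statement's English description precedes it below -/
import Mathlib

section
/- Assume C is semiprime. If t ∈ C is pure, then ρ(t) = t; in particular, ρ(a) = a for every complemented element a ∈ C. -/
open CompleteLattice

/-- A complete lattice equipped with a commutator operation, axiomatizing the congruence
lattice of an algebra in a semidegenerate congruence-modular variety whose compact
congruences are closed under the commutator. -/
class CommutatorLattice (C : Type*) [CompleteLattice C] where
  comm : C → C → C
  comm_comm : ∀ a b : C, comm a b = comm b a
  comm_sSup : ∀ (s : Set C) (b : C), comm (sSup s) b = ⨆ a ∈ s, comm a b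
  comm_le_inf : ∀ a b : C, comm a b ≤ a ⊓ b
  comm_top : ∀ a : C, comm a ⊤ = a
  compactlyGenerated : ∀ x : C,
    ∃ s : Set C, (∀ a ∈ s, IsCompactElement a) ∧ sSup s = x
  top_isCompact : IsCompactElement (⊤ : C)
  comm_isCompact : ∀ a b : C, IsCompactElement a → IsCompactElement b →
    IsCompactElement (comm a b)

namespace CommutatorLattice

variable {C : Type*} [CompleteLattice C] [CommutatorLattice C]

/-- The residuation `a → b := ⨆ {c | [a,c] ≤ b}`. -/
def resid (a b : C) : C := sSup {c : C | comm a c ≤ b}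

/-- The annihilator `a⊥ := a → ⊥`. -/
def ann (a : C) : C := resid a ⊥

/-- Iterated commutator: `cpow a n = [a,a]^n`, with the convention `[a,a]^0 = a`.
Note that `[a,b]^n` for `n ≥ 1` equals `cpow (comm a b) (n-1)`. -/
def cpow (a : C) : ℕ → C
  | 0 => a
  | n + 1 => comm (cpow a n) (cpow a n)

/-- Prime elements: `p ≠ ⊤` and `[a,b] ≤ p` implies `a ≤ p` or `b ≤ p`. -/
def IsPrime (p : C) : Prop := p ≠ ⊤ ∧ ∀ a b : C, comm a b ≤ p → a ≤ p ∨ b ≤ p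

/-- The radical `ρ(a) := ⨅ {p prime | a ≤ p}`. -/
def radical (a : C) : C := sInf {p : C | IsPrime p ∧ a ≤ p}

variable (C) in
/-- `C` is semiprime if `ρ(⊥) = ⊥`. -/
def Semiprime : Prop := radical (⊥ : C) = ⊥

variable (C) in
/-- Condition (⋆): for all compact `a`, `b` and all `n ≥ 1` there is `m ≥ 0` with
`[[a,a]^m, [b,b]^m] ≤ [a,b]^n`.  Here `cpow (comm a b) n = [a,b]^(n+1)`, so `n : ℕ`
ranges exactly over the exponents `≥ 1` of the paper. -/
def Star : Prop := ∀ a b : C, IsCompactElement a → IsCompactElement b →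
  ∀ n : ℕ, ∃ m : ℕ, comm (cpow a m) (cpow b m) ≤ cpow (comm a b) n

/-- Pure elements: `t ⊔ a⊥ = ⊤` for every compact `a ≤ t`. -/
def IsPure (t : C) : Prop := ∀ a : C, IsCompactElement a → a ≤ t → t ⊔ ann a = ⊤

/-- w-pure elements: `t ⊔ (a → ρ(⊥)) = ⊤` for every compact `a ≤ t`. -/
def IsWPure (t : C) : Prop :=
  ∀ a : C, IsCompactElement a → a ≤ t → t ⊔ resid a (radical ⊥) = ⊤

/-- Complemented elements. -/
def IsComplEl (a : C) : Prop := ∃ b : C, a ⊔ b = ⊤ ∧ a ⊓ b = ⊥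

/-- Regular elements: joins of sets of complemented elements. -/
def IsRegular (t : C) : Prop := ∃ S : Set C, (∀ a ∈ S, IsComplEl a) ∧ t = sSup S

/-- Max-regular elements: maximal among regular elements distinct from `⊤`. -/
def IsMaxRegular (t : C) : Prop :=
  IsRegular t ∧ t ≠ ⊤ ∧ ∀ u : C, IsRegular u → u ≠ ⊤ → t ≤ u → u = t

/-- Maximal elements of `C \ {⊤}`. -/
def IsMaximal (p : C) : Prop := p ≠ ⊤ ∧ ∀ q : C, q ≠ ⊤ → p ≤ q → q = p

/-- Minimal primes. -/
def IsMinPrime (p : C) : Prop := IsPrime p ∧ ∀ q : C, IsPrime q → q ≤ p → q = p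

variable (C) in
/-- `C` is mp if every prime lies above a unique minimal prime. -/
def MP : Prop := ∀ p : C, IsPrime p → ∃! q : C, IsMinPrime q ∧ q ≤ p

variable (C) in
/-- `C` is PF if `a⊥` is pure for every compact `a`. -/
def PF : Prop := ∀ a : C, IsCompactElement a → IsPure (ann a)

variable (C) in
/-- `C` is PP if `a⊥` is complemented for every compact `a`. -/
def PP : Prop := ∀ a : C, IsCompactElement a → IsComplEl (ann a)

/-- `O(p) := ⨆ {a compact | a⊥ ≰ p}`. -/
def O (p : C) : C := sSup {a : C | IsCompactElement a ∧ ¬ ann a ≤ p}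

variable (C) in
/-- `C` is normal. -/
def Normal : Prop := ∀ t u : C, t ⊔ u = ⊤ →
  ∃ a b : C, t ⊔ a = ⊤ ∧ u ⊔ b = ⊤ ∧ comm a b = ⊥

variable (C) in
/-- `C` is B-normal. -/
def BNormal : Prop := ∀ t u : C, t ⊔ u = ⊤ →
  ∃ a b : C, IsComplEl a ∧ IsComplEl b ∧ t ⊔ a = ⊤ ∧ u ⊔ b = ⊤ ∧ comm a b = ⊥

variable (C) in
/-- `C` is purified. -/
def Purified : Prop := ∀ p q : C, IsMinPrime p → IsMinPrime q → p ≠ q →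
  ∃ a : C, IsComplEl a ∧ a ≤ p ∧ ann a ≤ q

variable (C) in
/-- The prime spectrum of `C`. -/
abbrev Spec := {p : C // IsPrime p}

variable (C) in
/-- The Zariski topology on `Spec C`: the closed sets are the `V(t) = {p | t ≤ p}`,
equivalently the topology generated by the sets `D(t) = {p | t ≰ p}`. -/
def zariskiTop : TopologicalSpace (Spec C) :=
  TopologicalSpace.generateFrom {U : Set (Spec C) | ∃ t : C, U = {p : Spec C | ¬ t ≤ p.1}}

variable (C) in
/-- The flat topology on `Spec C`: generated by the open basis `V(a)`, `a` compact. -/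
def flatTop : TopologicalSpace (Spec C) :=
  TopologicalSpace.generateFrom
    {U : Set (Spec C) | ∃ a : C, IsCompactElement a ∧ U = {p : Spec C | a ≤ p.1}}

lemma comm_sup_left (a b c : C) : comm (a ⊔ b) c = comm a c ⊔ comm b c := by
  have h := comm_sSup {a, b} c
  rw [sSup_pair] at h
  rw [h, iSup_insert, iSup_singleton]

lemma comm_mono_left {a b : C} (h : a ≤ b) (c : C) : comm a c ≤ comm b c := by
  have h2 := comm_sup_left a b c
  rw [sup_eq_right.mpr h] at h2
  rw [h2]; exact le_sup_left

lemma comm_mono {a b a' b' : C} (h : a ≤ a') (h' : b ≤ b') : comm a b ≤ comm a' b' := by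
  calc comm a b ≤ comm a' b := comm_mono_left h b
    _ = comm b a' := comm_comm _ _
    _ ≤ comm b' a' := comm_mono_left h' a'
    _ = comm a' b' := comm_comm _ _

lemma comm_ann (x : C) : comm x (ann x) = ⊥ := by
  refine le_antisymm ?_ bot_le
  rw [comm_comm, ann, resid, comm_sSup]
  exact iSup₂_le fun c hc => (comm_comm c x) ▸ hc

lemma le_ann {x b : C} (h : comm x b ≤ ⊥) : b ≤ ann x := le_sSup h

lemma cpow_isCompact {a : C} (h : IsCompactElement a) (n : ℕ) :
    IsCompactElement (cpow a n) := by
  induction n with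
  | zero => exact h
  | succ n ih => exact comm_isCompact _ _ ih ih

lemma cpow_succ_le (a : C) (n : ℕ) : cpow a (n + 1) ≤ cpow a n := by
  have := comm_le_inf (cpow a n) (cpow a n)
  simpa [cpow] using this

lemma cpow_le_cpow (a : C) {m n : ℕ} (h : m ≤ n) : cpow a n ≤ cpow a m := by
  induction n with
  | zero => simp [Nat.le_zero.mp h]
  | succ n ih =>
    rcases Nat.lt_or_ge m (n + 1) with hlt | hge
    · exact (cpow_succ_le a n).trans (ih (Nat.lt_succ_iff.mp hlt))
    · have : m = n + 1 := le_antisymm h hge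
      simp [this]

lemma le_radical (t : C) : t ≤ radical t := le_sInf fun _ hp => hp.2

/-- If `c` is compact and `c ≤ ρ(t)`, then some iterated commutator of `c` lies below `t`. -/
lemma exists_cpow_le {c t : C} (hc : IsCompactElement c) (h : c ≤ radical t) :
    ∃ n : ℕ, cpow c n ≤ t := by
  by_contra hno
  push_neg at hno
  set S : Set C := {x | t ≤ x ∧ ∀ n : ℕ, ¬ cpow c n ≤ x} with hS
  have htS : t ∈ S := ⟨le_rfl, hno⟩
  obtain ⟨p, -, hpS, hpmax⟩ :
      ∃ p, t ≤ p ∧ p ∈ S ∧ ∀ z ∈ S, p ≤ z → z ≤ p := by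
    obtain ⟨p, hp1, hp2⟩ := zorn_le_nonempty₀ S (fun ch hch hchain y hy => by
      refine ⟨sSup ch, ⟨(hch hy).1.trans (le_sSup hy), fun n hn => ?_⟩, fun z hz => le_sSup hz⟩
      obtain ⟨x, hx, hle⟩ := (isCompactElement_iff_le_of_directed_sSup_le C _).mp
        (cpow_isCompact hc n) ch ⟨y, hy⟩ hchain.directedOn hn
      exact (hch hx).2 n hle) t htS
    exact ⟨p, hp1, hp2.1, fun z hz hpz => hp2.2 hz hpz⟩
  have hprime : IsPrime p := by
    constructor
    · rintro rfl
      exact hpS.2 0 le_top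
    · intro a b hab
      by_contra hcon
      push_neg at hcon
      obtain ⟨ha, hb⟩ := hcon
      have key : ∀ x : C, ¬ x ≤ p → ∃ n, cpow c n ≤ p ⊔ x := by
        intro x hx
        by_contra hxn
        push_neg at hxn
        have : p ⊔ x ∈ S := ⟨hpS.1.trans le_sup_left, hxn⟩
        exact hx (le_sup_right.trans (hpmax _ this le_sup_left))
      obtain ⟨n, hn⟩ := key a ha
      obtain ⟨m, hm⟩ := key b hb
      have h1 : cpow c (max n m) ≤ p ⊔ a := (cpow_le_cpow c (le_max_left n m)).trans hn
      have h2 : cpow c (max n m) ≤ p ⊔ b := (cpow_le_cpow c (le_max_right n m)).trans hm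
      have : cpow c (max n m + 1) ≤ p := by
        calc cpow c (max n m + 1) = comm (cpow c (max n m)) (cpow c (max n m)) := rfl
          _ ≤ comm (p ⊔ a) (p ⊔ b) := comm_mono h1 h2
          _ = comm p (p ⊔ b) ⊔ comm a (p ⊔ b) := comm_sup_left _ _ _
          _ ≤ p := by
              rw [comm_comm p (p ⊔ b), comm_comm a (p ⊔ b), comm_sup_left, comm_sup_left]
              have c1 : comm p p ≤ p := (comm_le_inf p p).trans inf_le_left
              have c2 : comm b p ≤ p := (comm_le_inf b p).trans inf_le_right
              have c3 : comm p a ≤ p := (comm_le_inf p a).trans inf_le_left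
              have c4 : comm b a ≤ p := (comm_comm b a) ▸ hab
              exact sup_le (sup_le c1 c2) (sup_le c3 c4)
      exact hpS.2 _ this
  have : c ≤ p := h.trans (sInf_le ⟨hprime, hpS.1⟩)
  exact hpS.2 0 this

/-- The key step: in a semiprime lattice, if `t` is pure, `d` compact, and `[d,d] ≤ t`,
then `d ≤ t`. -/
lemma pure_step (h : Semiprime C) {t d : C} (ht : IsPure t) (hd : IsCompactElement d)
    (hdd : comm d d ≤ t) : d ≤ t := by
  set a : C := comm d d with ha
  have haC : IsCompactElement a := comm_isCompact d d hd hd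
  have hpure : t ⊔ ann a = ⊤ := ht a haC hdd
  have he : comm d (ann a) ≤ radical (⊥ : C) := by
    refine le_sInf fun p hp => ?_
    rcases hp.1.2 a (ann a) (by rw [comm_ann]; exact bot_le) with hap | hannp
    · rcases hp.1.2 d d hap with hdp | hdp <;>
        exact (comm_le_inf d (ann a)).trans (inf_le_left.trans hdp)
    · exact (comm_le_inf d (ann a)).trans (inf_le_right.trans hannp)
  rw [h] at he
  calc d = comm d ⊤ := (comm_top d).symm
    _ = comm d (t ⊔ ann a) := by rw [hpure]
    _ = comm t d ⊔ comm (ann a) d := by rw [comm_comm d, comm_sup_left]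
    _ ≤ t ⊔ ⊥ := by
        refine sup_le (((comm_le_inf t d).trans inf_le_left).trans le_sup_left) ?_
        rw [comm_comm]
        exact he.trans le_sup_right
    _ = t := sup_bot_eq t

lemma pure_radical (h : Semiprime C) {t : C} (ht : IsPure t) : radical t = t := by
  refine le_antisymm ?_ (le_radical t)
  obtain ⟨s, hscomp, hssup⟩ := compactlyGenerated (radical t)
  rw [← hssup]
  refine sSup_le fun c hcs => ?_
  have hc : IsCompactElement c := hscomp c hcs
  have hcr : c ≤ radical t := hssup ▸ le_sSup hcs
  obtain ⟨n, hn⟩ := exists_cpow_le hc hcr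
  clear hcr hcs hssup
  induction n with
  | zero => exact hn
  | succ n ih =>
    exact ih (pure_step h ht (cpow_isCompact hc n) hn)

theorem statement2 (h : Semiprime C) :
    (∀ t : C, IsPure t → radical t = t) ∧ ∀ a : C, IsComplEl a → radical a = a := by
  refine ⟨fun t ht => pure_radical h ht, fun a ha => ?_⟩
  obtain ⟨b, hab, habi⟩ := ha
  refine pure_radical h fun c hc hca => ?_
  have hb : b ≤ ann c := le_ann (by
    calc comm c b ≤ a ⊓ b := le_trans (comm_mono hca le_rfl) (comm_le_inf a b)
      _ = ⊥ := habi)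
  have : (⊤ : C) ≤ a ⊔ ann c := hab ▸ sup_le_sup_left hb a
  exact top_le_iff.mp this

end CommutatorLattice
end

section
/- C is mp if and only if every minimal prime of C is w-pure. -/
open CompleteLattice

namespace CommutatorLattice

variable {C : Type*} [CompleteLattice C] [CommutatorLattice C]

/-! ### Auxiliary lemmas -/

lemma comm_sup_left' (x y z : C) : comm (x ⊔ y) z = comm x z ⊔ comm y z := by
  rw [← sSup_pair, comm_sSup, iSup_pair]

lemma comm_sup_right' (x y z : C) : comm z (x ⊔ y) = comm z x ⊔ comm z y := by
  rw [comm_comm, comm_sup_left', comm_comm x z, comm_comm y z]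

lemma comm_mono_left' {x y : C} (z : C) (h : x ≤ y) : comm x z ≤ comm y z := by
  have h1 : comm (x ⊔ y) z = comm x z ⊔ comm y z := comm_sup_left' x y z
  rw [sup_eq_right.2 h] at h1
  exact le_sup_left.trans h1.ge

lemma comm_mono' {a b c d : C} (hab : a ≤ b) (hcd : c ≤ d) : comm a c ≤ comm b d := by
  calc comm a c ≤ comm b c := comm_mono_left' c hab
    _ = comm c b := comm_comm b c
    _ ≤ comm d b := comm_mono_left' b hcd
    _ = comm b d := comm_comm d b

lemma comm_le_left' (a b : C) : comm a b ≤ a := (comm_le_inf a b).trans inf_le_left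

lemma comm_le_right' (a b : C) : comm a b ≤ b := (comm_le_inf a b).trans inf_le_right

lemma comm_resid_le' (a b : C) : comm a (resid a b) ≤ b := by
  rw [resid, comm_comm, comm_sSup]
  exact iSup₂_le fun c hc => by rw [comm_comm]; exact hc

lemma le_resid' {a b c : C} (h : comm a c ≤ b) : c ≤ resid a b := le_sSup h

lemma radical_bot_le_prime {q : C} (hq : IsPrime q) : radical (⊥ : C) ≤ q :=
  sInf_le ⟨hq, bot_le⟩

lemma resid_le_prime {a q : C} (hq : IsPrime q) (ha : ¬ a ≤ q) :
    resid a (radical ⊥) ≤ q := by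
  have h : comm a (resid a (radical ⊥)) ≤ q :=
    (comm_resid_le' a (radical ⊥)).trans (radical_bot_le_prime hq)
  rcases hq.2 _ _ h with h' | h'
  · exact absurd h' ha
  · exact h'

lemma prime_of_max' {m : C} (hm : m ≠ ⊤) (hmax : ∀ q : C, q ≠ ⊤ → m ≤ q → q = m) :
    IsPrime m := by
  refine ⟨hm, fun x y hxy => ?_⟩
  by_contra hcon
  push_neg at hcon
  obtain ⟨hx, hy⟩ := hcon
  have hmx : m ⊔ x = ⊤ := by
    by_contra h
    exact hx (le_sup_right.trans_eq (hmax _ h le_sup_left))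
  have hmy : m ⊔ y = ⊤ := by
    by_contra h
    exact hy (le_sup_right.trans_eq (hmax _ h le_sup_left))
  have : (⊤ : C) ≤ m := by
    calc (⊤ : C) = comm ⊤ ⊤ := (comm_top ⊤).symm
      _ = comm (m ⊔ x) (m ⊔ y) := by rw [hmx, hmy]
      _ = (comm m (m ⊔ y) ⊔ (comm x m ⊔ comm x y)) := by
          rw [comm_sup_left', comm_sup_right' m y x]
      _ ≤ m := by
          apply sup_le (comm_le_left' _ _)
          exact sup_le (comm_le_right' _ _) hxy
  exact hm (top_le_iff.1 this)

lemma exists_maximal_above' {x : C} (hx : x ≠ ⊤) :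
    ∃ m : C, x ≤ m ∧ m ≠ ⊤ ∧ ∀ q : C, q ≠ ⊤ → m ≤ q → q = m := by
  have hchain : ∀ c ⊆ {y : C | y ≠ ⊤}, IsChain (· ≤ ·) c → ∀ y ∈ c,
      ∃ ub ∈ {y : C | y ≠ ⊤}, ∀ z ∈ c, z ≤ ub := by
    intro c hcs hc y hy
    refine ⟨sSup c, ?_, fun z hz => _root_.le_sSup hz⟩
    intro htop
    have hdir : DirectedOn (· ≤ ·) c := hc.directedOn
    obtain ⟨z, hzc, hz⟩ := (isCompactElement_iff_le_of_directed_sSup_le C ⊤).1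
      top_isCompact c ⟨y, hy⟩ hdir htop.ge
    exact hcs hzc (top_le_iff.1 hz)
  obtain ⟨m, hxm, hmem, hmax⟩ := zorn_le_nonempty₀ {y : C | y ≠ ⊤} hchain x hx
  exact ⟨m, hxm, hmem, fun q hq hmq => le_antisymm (hmax hq hmq) hmq⟩

lemma sInf_prime_of_chain {d : Set C} (hne : d.Nonempty) (hch : IsChain (· ≤ ·) d)
    (hpr : ∀ q ∈ d, IsPrime q) : IsPrime (sInf d) := by
  constructor
  · intro htop
    obtain ⟨y, hy⟩ := hne
    exact (hpr y hy).1 (top_le_iff.1 (htop ▸ sInf_le hy))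
  · intro a b hab
    by_contra hcon
    push_neg at hcon
    obtain ⟨ha, hb⟩ := hcon
    obtain ⟨q1, hq1d, hq1⟩ : ∃ q1 ∈ d, ¬ a ≤ q1 := by
      by_contra h; push_neg at h; exact ha (le_sInf h)
    obtain ⟨q2, hq2d, hq2⟩ : ∃ q2 ∈ d, ¬ b ≤ q2 := by
      by_contra h; push_neg at h; exact hb (le_sInf h)
    rcases eq_or_ne q1 q2 with rfl | hne12
    · rcases (hpr q1 hq1d).2 a b (hab.trans (sInf_le hq1d)) with h | h
      · exact hq1 h
      · exact hq2 h
    rcases hch hq1d hq2d hne12 with h12 | h21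
    · rcases (hpr q1 hq1d).2 a b (hab.trans (sInf_le hq1d)) with h | h
      · exact hq1 h
      · exact hq2 (h.trans h12)
    · rcases (hpr q2 hq2d).2 a b (hab.trans (sInf_le hq2d)) with h | h
      · exact hq1 (h.trans h21)
      · exact hq2 h

lemma exists_minPrime_le {p : C} (hp : IsPrime p) : ∃ q : C, IsMinPrime q ∧ q ≤ p := by
  set S : Set Cᵒᵈ := {q : Cᵒᵈ | IsPrime (OrderDual.ofDual q) ∧ OrderDual.ofDual q ≤ p}
    with hS
  have hchain : ∀ c ⊆ S, IsChain (· ≤ ·) c → ∀ y ∈ c, ∃ ub ∈ S, ∀ z ∈ c, z ≤ ub := by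
    intro c hcs hc y hy
    refine ⟨OrderDual.toDual (sInf (OrderDual.ofDual '' c)), ⟨?_, ?_⟩, ?_⟩
    · refine sInf_prime_of_chain (d := OrderDual.ofDual '' c)
        ⟨OrderDual.ofDual y, Set.mem_image_of_mem _ hy⟩ ?_ ?_
      · rintro _ ⟨u, huc, rfl⟩ _ ⟨v, hvc, rfl⟩ huv
        rcases hc huc hvc (fun h => huv (congrArg OrderDual.ofDual h)) with h | h
        · exact Or.inr h
        · exact Or.inl h
      · rintro _ ⟨u, huc, rfl⟩
        exact (hcs huc).1
    · exact (_root_.sInf_le (Set.mem_image_of_mem OrderDual.ofDual hy)).trans (hcs hy).2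
    · intro z hz
      exact _root_.sInf_le (Set.mem_image_of_mem OrderDual.ofDual hz)
  obtain ⟨m, hpm, hmem, hmax⟩ := zorn_le_nonempty₀ S hchain
    (OrderDual.toDual p) ⟨hp, le_rfl⟩
  refine ⟨OrderDual.ofDual m, ⟨hmem.1, fun q hq hqm => ?_⟩, hmem.2⟩
  have hqmem : (OrderDual.toDual q) ∈ S := ⟨hq, hqm.trans hmem.2⟩
  exact le_antisymm hqm (hmax hqmem hqm)

/-- The "multiplicative set" generated by `a` and the compact elements not below `m`. -/
inductive Mul (m a : C) : C → Prop
  | base : Mul m a a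
  | elt (c : C) : IsCompactElement c → ¬ c ≤ m → Mul m a c
  | mul (x y : C) : Mul m a x → Mul m a y → Mul m a (comm x y)

lemma Mul.compact {m a : C} (ha : IsCompactElement a) {s : C} (h : Mul m a s) :
    IsCompactElement s := by
  induction h with
  | base => exact ha
  | elt c hc _ => exact hc
  | mul x y _ _ ihx ihy => exact comm_isCompact x y ihx ihy

lemma Mul.invariant {m a : C} (hm : IsPrime m) {s : C} (h : Mul m a s) :
    ∃ b : C, IsCompactElement b ∧ ¬ b ≤ m ∧
      ∀ q : C, IsPrime q → s ≤ q → a ≤ q ∨ b ≤ q := by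
  induction h with
  | base =>
    refine ⟨⊤, top_isCompact, fun h => hm.1 (top_le_iff.1 h), fun q _ hq => Or.inl hq⟩
  | elt c hc hcm =>
    exact ⟨c, hc, hcm, fun q _ hq => Or.inr hq⟩
  | mul x y _ _ ihx ihy =>
    obtain ⟨b1, hb1c, hb1m, hb1⟩ := ihx
    obtain ⟨b2, hb2c, hb2m, hb2⟩ := ihy
    refine ⟨comm b1 b2, comm_isCompact b1 b2 hb1c hb2c, ?_, ?_⟩
    · intro hle
      rcases hm.2 b1 b2 hle with h | h
      · exact hb1m h
      · exact hb2m h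
    · intro q hq hle
      rcases hq.2 x y hle with h | h
      · rcases hb1 q hq h with h' | h'
        · exact Or.inl h'
        · exact Or.inr ((comm_le_left' b1 b2).trans h')
      · rcases hb2 q hq h with h' | h'
        · exact Or.inl h'
        · exact Or.inr ((comm_le_right' b1 b2).trans h')

/-- Key lemma: if `m` is prime, `a` compact, and `a → ρ(⊥) ≤ m`, then there is a prime
`q ≤ m` with `a ≰ q`. -/
lemma exists_prime_le_not_le {m a : C} (hm : IsPrime m) (ha : IsCompactElement a)
    (hres : resid a (radical ⊥) ≤ m) : ∃ q : C, IsPrime q ∧ q ≤ m ∧ ¬ a ≤ q := by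
  -- No element of the multiplicative set is below the radical.
  have step1 : ∀ s : C, Mul m a s → ¬ s ≤ radical ⊥ := by
    intro s hs hle
    obtain ⟨b, hbc, hbm, hb⟩ := hs.invariant hm
    have hab : comm a b ≤ radical ⊥ := by
      apply _root_.le_sInf
      rintro q ⟨hq, -⟩
      rcases hb q hq (hle.trans (_root_.sInf_le ⟨hq, bot_le⟩)) with h | h
      · exact (comm_le_left' a b).trans h
      · exact (comm_le_right' a b).trans h
    exact hbm ((le_resid' hab).trans hres)
  -- Zorn's lemma on elements above the radical avoiding the multiplicative set.
  set T : Set C := {x : C | radical ⊥ ≤ x ∧ ∀ s : C, Mul m a s → ¬ s ≤ x} with hT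
  have hchain : ∀ c ⊆ T, IsChain (· ≤ ·) c → ∀ y ∈ c, ∃ ub ∈ T, ∀ z ∈ c, z ≤ ub := by
    intro c hcs hc y hy
    refine ⟨sSup c, ⟨((hcs hy).1).trans (_root_.le_sSup hy), fun s hs hle => ?_⟩,
      fun z hz => _root_.le_sSup hz⟩
    obtain ⟨z, hzc, hz⟩ := (isCompactElement_iff_le_of_directed_sSup_le C s).1
      (hs.compact ha) c ⟨y, hy⟩ hc.directedOn hle
    exact (hcs hzc).2 s hs hz
  obtain ⟨q, -, hqmem, hqmax⟩ := zorn_le_nonempty₀ T hchain (radical ⊥) ⟨le_rfl, step1⟩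
  have hqa : ¬ a ≤ q := hqmem.2 a Mul.base
  have hq : IsPrime q := by
    constructor
    · intro htop
      exact hqa (htop ▸ le_top)
    · intro x y hxy
      by_contra hcon
      push_neg at hcon
      obtain ⟨hx, hy'⟩ := hcon
      have hnx : q ⊔ x ∉ T := by
        intro hmem
        exact hx (le_sup_right.trans (hqmax hmem le_sup_left))
      have hny : q ⊔ y ∉ T := by
        intro hmem
        exact hy' (le_sup_right.trans (hqmax hmem le_sup_left))
      have hs1 : ∃ s1 : C, Mul m a s1 ∧ s1 ≤ q ⊔ x := by
        by_contra h; push_neg at h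
        exact hnx ⟨hqmem.1.trans le_sup_left, fun s hs => h s hs⟩
      have hs2 : ∃ s2 : C, Mul m a s2 ∧ s2 ≤ q ⊔ y := by
        by_contra h; push_neg at h
        exact hny ⟨hqmem.1.trans le_sup_left, fun s hs => h s hs⟩
      obtain ⟨s1, hs1m, hs1le⟩ := hs1
      obtain ⟨s2, hs2m, hs2le⟩ := hs2
      have : comm s1 s2 ≤ q := by
        calc comm s1 s2 ≤ comm (q ⊔ x) (q ⊔ y) := comm_mono' hs1le hs2le
          _ = comm q (q ⊔ y) ⊔ (comm x q ⊔ comm x y) := by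
              rw [comm_sup_left', comm_sup_right' q y x]
          _ ≤ q := by
              apply sup_le (comm_le_left' _ _)
              exact sup_le (comm_le_right' _ _) hxy
      exact hqmem.2 _ (Mul.mul s1 s2 hs1m hs2m) this
  refine ⟨q, hq, ?_, hqa⟩
  obtain ⟨sgen, hcomp, hsup⟩ := compactlyGenerated q
  rw [← hsup]
  apply _root_.sSup_le
  intro c hcgen
  by_contra hcm
  exact hqmem.2 c (Mul.elt c (hcomp c hcgen) hcm) (hsup ▸ _root_.le_sSup hcgen)

theorem statement12 : MP C ↔ ∀ p : C, IsMinPrime p → IsWPure p := by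
  constructor
  · -- MP implies every minimal prime is w-pure
    intro hmp p hp a hac hap
    by_contra hne
    obtain ⟨m, hm, hmtop, hmmax⟩ := exists_maximal_above' hne
    have hmprime : IsPrime m := prime_of_max' hmtop hmmax
    have hpm : p ≤ m := le_sup_left.trans hm
    have hresm : resid a (radical ⊥) ≤ m := le_sup_right.trans hm
    obtain ⟨q, hqprime, hqm, hqa⟩ := exists_prime_le_not_le hmprime hac hresm
    obtain ⟨q', hq', hq'q⟩ := exists_minPrime_le hqprime
    obtain ⟨r, -, hruniq⟩ := hmp m hmprime
    have h1 : q' = r := hruniq q' ⟨hq', hq'q.trans hqm⟩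
    have h2 : p = r := hruniq p ⟨hp, hpm⟩
    have haq' : a ≤ q' := by rw [h1, ← h2]; exact hap
    exact hqa (haq'.trans hq'q)
  · -- every minimal prime w-pure implies MP
    intro hw p hp
    obtain ⟨q, hq, hqp⟩ := exists_minPrime_le hp
    refine ⟨q, ⟨hq, hqp⟩, fun y hy => ?_⟩
    obtain ⟨hymin, hyp⟩ := hy
    by_contra hne
    have hynle : ¬ y ≤ q := fun h => hne (hq.2 y hymin.1 h)
    obtain ⟨c, hcy, hcc, hcq⟩ : ∃ c : C, c ≤ y ∧ IsCompactElement c ∧ ¬ c ≤ q := by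
      obtain ⟨sgen, hcomp, hsup⟩ := compactlyGenerated y
      by_contra h; push_neg at h
      apply hynle
      rw [← hsup]
      apply _root_.sSup_le
      intro c hcgen
      exact h c (hsup ▸ _root_.le_sSup hcgen) (hcomp c hcgen)
    have hwy : y ⊔ resid c (radical ⊥) = ⊤ := hw y hymin c hcc hcy
    have hresq : resid c (radical ⊥) ≤ q := resid_le_prime hq.1 hcq
    have : (⊤ : C) ≤ p := hwy ▸ sup_le hyp (hresq.trans hqp)
    exact hp.1 (top_le_iff.1 this)

end CommutatorLattice
end
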